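/- Let X be a finite set with |X| ≥ 2 and let θ be a categorical distribution on X with unique extremizers. Fix α ∈ ℝ, and set t := H(T(θ,α)||θ) and Dα := D(T(θ,α)||θ). Then the normalized information (1/n)·log(1/θⁿ(Xⁿ)) satisfies the large deviation principle with rate Dα at the point t, in the following sense: for every δ > 0 there exists ε₀ > 0 such that for every ε with 0 < ε ≤ ε₀ there exists N such that for all n ≥ N, | −(1/n)·log P_θ({ xⁿ ∈ Xⁿ : |(1/n)·log(1/θⁿ(xⁿ)) − t| < ε }) − Dα | < δ. -/

import Mathlib

open Real BigOperators
open scoped Classical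

variable {X : Type*}

/-- A categorical distribution on a finite set: positive everywhere and sums to 1. -/
def IsCatDist [Fintype X] (θ : X → ℝ) : Prop :=
  (∀ x, 0 < θ x) ∧ ∑ x, θ x = 1

/-- The tilt of order `α` of a categorical distribution. -/
noncomputable def tilt [Fintype X] (θ : X → ℝ) (α : ℝ) : X → ℝ :=
  fun x => θ x ^ α / ∑ y, θ y ^ α

/-- Shannon entropy (natural log). -/
noncomputable def shannonEntropy [Fintype X] (ρ : X → ℝ) : ℝ :=
  ∑ x, ρ x * Real.log (1 / ρ x)

/-- Cross entropy `H(ρ‖θ)`. -/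
noncomputable def crossEntropy [Fintype X] (ρ θ : X → ℝ) : ℝ :=
  ∑ x, ρ x * Real.log (1 / θ x)

/-- Relative entropy (KL divergence) `D(ρ‖θ)`. -/
noncomputable def relEntropy [Fintype X] (ρ θ : X → ℝ) : ℝ :=
  ∑ x, ρ x * Real.log (ρ x / θ x)

/-- Rényi entropy of order `α`. -/
noncomputable def renyiEntropy [Fintype X] (θ : X → ℝ) (α : ℝ) : ℝ :=
  (1 / (1 - α)) * Real.log (∑ x, θ x ^ α)

/-- Varentropy. -/
noncomputable def varentropy [Fintype X] (ρ : X → ℝ) : ℝ :=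
  ∑ x, ρ x * (Real.log (1 / ρ x) - shannonEntropy ρ) ^ 2

/-- Cross varentropy. -/
noncomputable def crossVarentropy [Fintype X] (ρ θ : X → ℝ) : ℝ :=
  ∑ x, ρ x * (Real.log (1 / θ x) - crossEntropy ρ θ) ^ 2

/-- Probability of an `n`-string under the i.i.d. extension of `θ`. -/
noncomputable def strProb (θ : X → ℝ) {n : ℕ} (x : Fin n → X) : ℝ := ∏ i, θ (x i)

/-- Probability of a set of `n`-strings. -/
noncomputable def setProb [Fintype X] (θ : X → ℝ) {n : ℕ} (S : Finset (Fin n → X)) : ℝ :=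
  ∑ x ∈ S, strProb θ x

/-- `θ` has a unique maximizer and a unique minimizer. -/
def UniqueExtremizers [Fintype X] (θ : X → ℝ) : Prop :=
  (∃! x : X, ∀ y, θ y ≤ θ x) ∧ (∃! x : X, ∀ y, θ x ≤ θ y)

/-- Tilted weakly typical set of order `α`. -/
noncomputable def typicalSetA [Fintype X] (θ : X → ℝ) (α : ℝ) (n : ℕ) (ε : ℝ) :
    Finset (Fin n → X) :=
  Finset.univ.filter (fun x =>
    Real.exp (-(n : ℝ) * crossEntropy (tilt θ α) θ - n * ε) < strProb θ x ∧
    strProb θ x < Real.exp (-(n : ℝ) * crossEntropy (tilt θ α) θ + n * ε))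

/-- The set `D^n_{θ,α,ε}`. -/
noncomputable def setD [Fintype X] (θ : X → ℝ) (α : ℝ) (n : ℕ) (ε : ℝ) :
    Finset (Fin n → X) :=
  Finset.univ.filter (fun x =>
    strProb (tilt θ α) x > Real.exp (-(n : ℝ) * shannonEntropy (tilt θ α) - n * |α| * ε))

/-- The set `E^n_{θ,α,ε}`. -/
noncomputable def setE [Fintype X] (θ : X → ℝ) (α : ℝ) (n : ℕ) (ε : ℝ) :
    Finset (Fin n → X) :=
  Finset.univ.filter (fun x =>
    strProb (tilt θ α) x < Real.exp (-(n : ℝ) * shannonEntropy (tilt θ α) + n * |α| * ε))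

/-- A guesswork function for `θ` on `n`-strings: a bijection onto `{1,…,|X|^n}`
that orders strings from most likely to least likely. -/
def IsGuesswork [Fintype X] (θ : X → ℝ) {n : ℕ} (G : (Fin n → X) → ℕ) : Prop :=
  Function.Injective G ∧
  (∀ x, G x ∈ Finset.Icc 1 (Fintype.card X ^ n)) ∧
  (∀ m ∈ Finset.Icc 1 (Fintype.card X ^ n), ∃ x, G x = m) ∧
  (∀ x y, strProb θ x > strProb θ y → G x < G y)

lemma sum_pi_prod [Fintype X] (n : ℕ) (u : Fin n → X → ℝ) :
    ∑ x : Fin n → X, ∏ i, u i (x i) = ∏ i, ∑ y, u i y := by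
  rw [Finset.prod_univ_sum]
  rw [Fintype.piFinset_univ]

lemma second_moment [Fintype X] (ρ g : X → ℝ) (hsum : ∑ y, ρ y = 1)
    (hg : ∑ y, ρ y * g y = 0) (n : ℕ) :
    ∑ x : Fin n → X, (∏ i, ρ (x i)) * (∑ i, g (x i)) ^ 2
      = n * ∑ y, ρ y * g y ^ 2 := by
  have key : ∀ i j : Fin n,
      ∑ x : Fin n → X, (∏ k, ρ (x k)) * (g (x i) * g (x j))
        = if i = j then ∑ y, ρ y * g y ^ 2 else 0 := by
    intro i j
    have h1 : ∀ x : Fin n → X,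
        (∏ k, ρ (x k)) * (g (x i) * g (x j))
          = ∏ k, (ρ (x k) * (if k = i then g (x k) else 1)
              * (if k = j then g (x k) else 1)) := by
      intro x
      rw [Finset.prod_mul_distrib, Finset.prod_mul_distrib]
      have e1 : ∏ k, (if k = i then g (x k) else 1) = g (x i) := by
        simp
      have e2 : ∏ k, (if k = j then g (x k) else 1) = g (x j) := by
        simp
      rw [e1, e2]; ring
    have h2 : ∑ x : Fin n → X, (∏ k, ρ (x k)) * (g (x i) * g (x j))
        = ∏ k, ∑ y, (ρ y * (if k = i then g y else 1) * (if k = j then g y else 1)) := by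
      simp_rw [h1]
      exact sum_pi_prod n (fun k y => ρ y * (if k = i then g y else 1) * (if k = j then g y else 1))
    rw [h2]
    by_cases hij : i = j
    · subst hij
      simp only [if_pos rfl]
      rw [Finset.prod_eq_single i]
      · simp [sq, mul_assoc]
      · intro b _ hb
        simp [hb, hsum]
      · simp
    · rw [if_neg hij]
      apply Finset.prod_eq_zero (Finset.mem_univ i)
      simp [hij, hg]
  have expand : ∀ x : Fin n → X,
      (∏ i, ρ (x i)) * (∑ i, g (x i)) ^ 2
        = ∑ i : Fin n, ∑ j : Fin n, (∏ k, ρ (x k)) * (g (x i) * g (x j)) := by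
    intro x
    rw [sq, Finset.sum_mul_sum]
    rw [Finset.mul_sum]
    refine Finset.sum_congr rfl fun i _ => ?_
    rw [Finset.mul_sum]
  calc ∑ x : Fin n → X, (∏ i, ρ (x i)) * (∑ i, g (x i)) ^ 2
      = ∑ x : Fin n → X, ∑ i : Fin n, ∑ j : Fin n, (∏ k, ρ (x k)) * (g (x i) * g (x j)) := by
        simp_rw [expand]
    _ = ∑ i : Fin n, ∑ j : Fin n, ∑ x : Fin n → X, (∏ k, ρ (x k)) * (g (x i) * g (x j)) := by
        rw [Finset.sum_comm]
        exact Finset.sum_congr rfl fun i _ => Finset.sum_comm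
    _ = ∑ i : Fin n, ∑ j : Fin n, (if i = j then ∑ y, ρ y * g y ^ 2 else 0) := by
        simp_rw [key]
    _ = n * ∑ y, ρ y * g y ^ 2 := by
        simp [Finset.sum_ite_eq, Finset.mul_sum]
theorem information_ldp [Fintype X] (hcard : 2 ≤ Fintype.card X)
    (θ : X → ℝ) (hθ : IsCatDist θ) (hext : UniqueExtremizers θ) (α : ℝ) :
    ∀ δ : ℝ, 0 < δ → ∃ ε₀ : ℝ, 0 < ε₀ ∧ ∀ ε : ℝ, 0 < ε → ε ≤ ε₀ →
      ∃ N : ℕ, ∀ n : ℕ, N ≤ n →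
        |(-(1 / (n : ℝ)) * Real.log (setProb θ
            (Finset.univ.filter (fun x : Fin n → X =>
              |(1 / (n : ℝ)) * Real.log (1 / strProb θ x) -
                crossEntropy (tilt θ α) θ| < ε)))) -
          relEntropy (tilt θ α) θ| < δ := by
  intro δ hδ
  obtain ⟨hθpos, hθsum⟩ := hθ
  have hXne : Nonempty X := by
    have : 0 < Fintype.card X := lt_of_lt_of_le (by norm_num) hcard
    exact Fintype.card_pos_iff.mp this
  have hZpos : 0 < ∑ y, θ y ^ α :=
    Finset.sum_pos (fun y _ => Real.rpow_pos_of_pos (hθpos y) α) Finset.univ_nonempty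
  set ρ : X → ℝ := tilt θ α with hρdef
  have hρpos : ∀ y, 0 < ρ y := fun y =>
    div_pos (Real.rpow_pos_of_pos (hθpos y) α) hZpos
  have hρsum : ∑ y, ρ y = 1 := by
    simp only [hρdef, tilt]
    rw [← Finset.sum_div, div_self (ne_of_gt hZpos)]
  have hlogρ : ∀ y, Real.log (ρ y)
      = α * Real.log (θ y) - Real.log (∑ z, θ z ^ α) := by
    intro y
    simp only [hρdef, tilt]
    rw [Real.log_div (ne_of_gt (Real.rpow_pos_of_pos (hθpos y) α)) (ne_of_gt hZpos),
      Real.log_rpow (hθpos y)]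
  set f : X → ℝ := fun y => Real.log (1 / θ y) with hfdef
  have hf : ∀ y, f y = - Real.log (θ y) := by
    intro y; simp only [hfdef, one_div, Real.log_inv]
  set t := crossEntropy ρ θ with htdef
  have ht : t = ∑ y, ρ y * f y := rfl
  set D := relEntropy ρ θ with hDdef
  have hD : D = (1 - α) * t - Real.log (∑ z, θ z ^ α) := by
    have e : ∀ y, ρ y * Real.log (ρ y / θ y)
        = (1 - α) * (ρ y * f y) - Real.log (∑ z, θ z ^ α) * ρ y := by
      intro y
      rw [Real.log_div (ne_of_gt (hρpos y)) (ne_of_gt (hθpos y)), hlogρ y, hf y]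
      ring
    have : D = ∑ y, ((1 - α) * (ρ y * f y) - Real.log (∑ z, θ z ^ α) * ρ y) := by
      rw [hDdef]
      exact Finset.sum_congr rfl fun y _ => e y
    rw [this, Finset.sum_sub_distrib, ← Finset.mul_sum, ← Finset.mul_sum, hρsum,
      mul_one, ← ht]
  set g : X → ℝ := fun y => f y - t with hgdef
  have hgsum : ∑ y, ρ y * g y = 0 := by
    have e : ∑ y, ρ y * g y = (∑ y, ρ y * f y) - (∑ y, ρ y) * t := by
      simp only [hgdef, mul_sub]
      rw [Finset.sum_sub_distrib, Finset.sum_mul]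
    rw [e, hρsum, one_mul, ← ht, sub_self]
  set σ2 := ∑ y, ρ y * g y ^ 2 with hσdef
  have hσnonneg : 0 ≤ σ2 :=
    Finset.sum_nonneg fun y _ => mul_nonneg (le_of_lt (hρpos y)) (sq_nonneg _)
  have hθstr : ∀ {n : ℕ} (x : Fin n → X), 0 < strProb θ x := by
    intro n x; exact Finset.prod_pos fun i _ => hθpos _
  have hρstr : ∀ {n : ℕ} (x : Fin n → X), 0 < strProb ρ x := by
    intro n x; exact Finset.prod_pos fun i _ => hρpos _
  have hlogθstr : ∀ {n : ℕ} (x : Fin n → X),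
      Real.log (strProb θ x) = ∑ i, Real.log (θ (x i)) := by
    intro n x
    exact Real.log_prod fun i _ => ne_of_gt (hθpos _)
  have hrel : ∀ {n : ℕ} (x : Fin n → X),
      Real.log (strProb ρ x)
        = α * Real.log (strProb θ x) - n * Real.log (∑ z, θ z ^ α) := by
    intro n x
    have h1 : Real.log (strProb ρ x) = ∑ i, Real.log (ρ (x i)) :=
      Real.log_prod fun i _ => ne_of_gt (hρpos _)
    rw [h1, hlogθstr x]
    simp_rw [hlogρ]
    rw [Finset.sum_sub_distrib, ← Finset.mul_sum, Finset.sum_const, Finset.card_univ,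
      Fintype.card_fin, nsmul_eq_mul]
  set c := |1 - α| with hcdef
  have hc0 : 0 ≤ c := abs_nonneg _
  have hc1 : (0:ℝ) < c + 1 := by linarith
  refine ⟨δ / (2 * (c + 1)), by positivity, ?_⟩
  intro ε hε hεle
  have hcε : c * ε < δ / 2 := by
    have h1 : c * ε ≤ c * (δ / (2 * (c + 1))) :=
      mul_le_mul_of_nonneg_left hεle hc0
    have h2 : c * (δ / (2 * (c + 1))) < δ / 2 := by
      have e : c * (δ / (2 * (c + 1))) = δ / 2 * (c / (c + 1)) := by
        field_simp
      have hlt : c / (c + 1) < 1 := (div_lt_one hc1).mpr (by linarith)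
      rw [e]
      calc δ / 2 * (c / (c + 1)) < δ / 2 * 1 := by
            apply mul_lt_mul_of_pos_left hlt (by linarith)
        _ = δ / 2 := mul_one _
    linarith
  refine ⟨max (⌈2 * σ2 / ε ^ 2⌉₊ + 1) (⌈2 * Real.log 2 / δ⌉₊ + 1), ?_⟩
  intro n hn
  have hn1 : ⌈2 * σ2 / ε ^ 2⌉₊ + 1 ≤ n := le_trans (le_max_left _ _) hn
  have hn2 : ⌈2 * Real.log 2 / δ⌉₊ + 1 ≤ n := le_trans (le_max_right _ _) hn
  have hnpos : 0 < n := lt_of_lt_of_le (Nat.succ_pos _) hn1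
  have hnR : (0:ℝ) < n := by exact_mod_cast hnpos
  have hnne : (n:ℝ) ≠ 0 := ne_of_gt hnR
  -- the set S and its membership condition
  set S := Finset.univ.filter (fun x : Fin n → X =>
      |(1 / (n : ℝ)) * Real.log (1 / strProb θ x) - t| < ε) with hSdef
  have hmem : ∀ x : Fin n → X,
      (|(1 / (n:ℝ)) * Real.log (1 / strProb θ x) - t| < ε)
        ↔ |Real.log (strProb θ x) + n * t| < n * ε := by
    intro x
    rw [one_div (strProb θ x), Real.log_inv]
    have e : (1 / (n:ℝ)) * (-Real.log (strProb θ x)) - t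
        = -((Real.log (strProb θ x) + n * t) / n) := by
      field_simp
      ring
    rw [e, abs_neg, abs_div, abs_of_pos hnR, div_lt_iff₀ hnR]
    ring_nf
  -- pointwise sandwich on S
  have hsandwich : ∀ x ∈ S,
      strProb ρ x * Real.exp (-(n * D) - c * (n * ε)) ≤ strProb θ x ∧
      strProb θ x ≤ strProb ρ x * Real.exp (-(n * D) + c * (n * ε)) := by
    intro x hx
    rw [hSdef, Finset.mem_filter] at hx
    have hx' : |Real.log (strProb θ x) + n * t| < n * ε := (hmem x).mp hx.2
    set L := Real.log (strProb θ x) with hLdef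
    have hkey : strProb θ x
        = strProb ρ x * Real.exp ((1 - α) * L + n * Real.log (∑ z, θ z ^ α)) := by
      conv_lhs => rw [← Real.exp_log (hθstr x)]
      conv_rhs => rw [← Real.exp_log (hρstr x), ← Real.exp_add]
      congr 1
      rw [hrel x]
      ring
    have hexpbd : |((1 - α) * L + n * Real.log (∑ z, θ z ^ α)) + n * D| ≤ c * (n * ε) := by
      have e : (1 - α) * L + n * Real.log (∑ z, θ z ^ α) + n * D
          = (1 - α) * (L + n * t) := by
        rw [hD]; ring
      rw [e, abs_mul, ← hcdef]
      exact mul_le_mul_of_nonneg_left (le_of_lt hx') hc0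
    obtain ⟨hlo, hhi⟩ := abs_le.mp hexpbd
    constructor
    · rw [hkey]
      apply mul_le_mul_of_nonneg_left _ (le_of_lt (hρstr x))
      apply Real.exp_le_exp.mpr
      linarith
    · rw [hkey]
      apply mul_le_mul_of_nonneg_left _ (le_of_lt (hρstr x))
      apply Real.exp_le_exp.mpr
      linarith
  set Q := ∑ x ∈ S, strProb ρ x with hQdef
  have htot : ∑ x : Fin n → X, strProb ρ x = 1 := by
    simp only [strProb]
    rw [sum_pi_prod n (fun _ y => ρ y)]
    rw [Finset.prod_congr rfl (fun i _ => hρsum), Finset.prod_const_one]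
  have hQ1 : Q ≤ 1 := by
    rw [hQdef, hSdef, ← htot]
    exact Finset.sum_le_sum_of_subset_of_nonneg (Finset.filter_subset _ _)
      (fun x _ _ => le_of_lt (hρstr x))
  -- Chebyshev lower bound on Q
  have hLg : ∀ x : Fin n → X,
      Real.log (strProb θ x) + n * t = -(∑ i, g (x i)) := by
    intro x
    rw [hlogθstr x]
    have e1 : ∑ i, g (x i) = (∑ i, f (x i)) - n * t := by
      simp only [hgdef]
      rw [Finset.sum_sub_distrib, Finset.sum_const, Finset.card_univ, Fintype.card_fin,
        nsmul_eq_mul]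
    have e2 : ∑ i, f (x i) = -∑ i, Real.log (θ (x i)) := by
      rw [← Finset.sum_neg_distrib]
      exact Finset.sum_congr rfl fun i _ => hf _
    rw [e1, e2]; ring
  have hsm : ∑ x : Fin n → X, strProb ρ x * (∑ i, g (x i)) ^ 2 = n * σ2 := by
    simp only [strProb]
    exact second_moment ρ g hρsum hgsum n
  have hQhalf : (1:ℝ)/2 ≤ Q := by
    have hsplit := Finset.sum_filter_add_sum_filter_not Finset.univ
      (fun x : Fin n → X => |(1 / (n : ℝ)) * Real.log (1 / strProb θ x) - t| < ε)
      (fun x => strProb ρ x)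
    have hQc : ∑ x ∈ Finset.univ.filter (fun x : Fin n → X =>
        ¬ |(1 / (n : ℝ)) * Real.log (1 / strProb θ x) - t| < ε), strProb ρ x
        ≤ σ2 / (n * ε ^ 2) := by
      have hub : ∀ x ∈ Finset.univ.filter (fun x : Fin n → X =>
          ¬ |(1 / (n : ℝ)) * Real.log (1 / strProb θ x) - t| < ε),
          strProb ρ x ≤ strProb ρ x * ((∑ i, g (x i)) ^ 2 / ((n:ℝ) * ε) ^ 2) := by
        intro x hx
        rw [Finset.mem_filter] at hx
        have hx' : n * ε ≤ |Real.log (strProb θ x) + n * t| := by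
          have := hx.2
          rw [hmem x] at this
          linarith [not_lt.mp this]
        rw [hLg x, abs_neg] at hx'
        have hsq : ((n:ℝ) * ε) ^ 2 ≤ (∑ i, g (x i)) ^ 2 := by
          rw [← sq_abs (∑ i, g (x i))]
          apply pow_le_pow_left₀ (by positivity) hx'
        have hone : (1:ℝ) ≤ (∑ i, g (x i)) ^ 2 / ((n:ℝ) * ε) ^ 2 := by
          rw [le_div_iff₀ (by positivity)]
          linarith
        calc strProb ρ x = strProb ρ x * 1 := (mul_one _).symm
          _ ≤ strProb ρ x * ((∑ i, g (x i)) ^ 2 / ((n:ℝ) * ε) ^ 2) := by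
            apply mul_le_mul_of_nonneg_left hone (le_of_lt (hρstr x))
      calc ∑ x ∈ Finset.univ.filter (fun x : Fin n → X =>
            ¬ |(1 / (n : ℝ)) * Real.log (1 / strProb θ x) - t| < ε), strProb ρ x
          ≤ ∑ x ∈ Finset.univ.filter (fun x : Fin n → X =>
            ¬ |(1 / (n : ℝ)) * Real.log (1 / strProb θ x) - t| < ε),
              strProb ρ x * ((∑ i, g (x i)) ^ 2 / ((n:ℝ) * ε) ^ 2) :=
            Finset.sum_le_sum hub
        _ ≤ ∑ x : Fin n → X, strProb ρ x * ((∑ i, g (x i)) ^ 2 / ((n:ℝ) * ε) ^ 2) := by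
            apply Finset.sum_le_sum_of_subset_of_nonneg (Finset.filter_subset _ _)
            intro x _ _
            exact mul_nonneg (le_of_lt (hρstr x)) (div_nonneg (sq_nonneg _) (sq_nonneg _))
        _ = (∑ x : Fin n → X, strProb ρ x * (∑ i, g (x i)) ^ 2) / ((n:ℝ) * ε) ^ 2 := by
            rw [Finset.sum_div]
            exact Finset.sum_congr rfl fun x _ => (mul_div_assoc _ _ _).symm
        _ = n * σ2 / ((n:ℝ) * ε) ^ 2 := by rw [hsm]
        _ = σ2 / (n * ε ^ 2) := by
            field_simp
    have hNσ : σ2 / ((n:ℝ) * ε ^ 2) ≤ 1/2 := by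
      have h1 : (2 * σ2 / ε ^ 2 : ℝ) ≤ n := by
        calc (2 * σ2 / ε ^ 2 : ℝ) ≤ ⌈2 * σ2 / ε ^ 2⌉₊ := Nat.le_ceil _
          _ ≤ n := by exact_mod_cast le_trans (Nat.le_succ _) hn1
      have h2 : 2 * σ2 ≤ (n:ℝ) * ε ^ 2 := by
        rw [div_le_iff₀ (by positivity : (0:ℝ) < ε ^ 2)] at h1
        linarith
      rw [div_le_iff₀ (by positivity)]
      linarith
    rw [hSdef] at hQdef
    have : Q + ∑ x ∈ Finset.univ.filter (fun x : Fin n → X =>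
        ¬ |(1 / (n : ℝ)) * Real.log (1 / strProb θ x) - t| < ε), strProb ρ x = 1 := by
      rw [hQdef, hsplit, htot]
    linarith
  -- bounds on P
  have hPdef : setProb θ S = ∑ x ∈ S, strProb θ x := rfl
  have hPub : setProb θ S ≤ Real.exp (-(n * D) + c * (n * ε)) := by
    calc setProb θ S ≤ ∑ x ∈ S, strProb ρ x * Real.exp (-(n * D) + c * (n * ε)) := by
          rw [hPdef]
          exact Finset.sum_le_sum fun x hx => (hsandwich x hx).2
      _ = Q * Real.exp (-(n * D) + c * (n * ε)) := by rw [hQdef, Finset.sum_mul]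
      _ ≤ 1 * Real.exp (-(n * D) + c * (n * ε)) :=
          mul_le_mul_of_nonneg_right hQ1 (Real.exp_nonneg _)
      _ = _ := one_mul _
  have hPlb : Real.exp (-(n * D) - c * (n * ε)) / 2 ≤ setProb θ S := by
    calc Real.exp (-(n * D) - c * (n * ε)) / 2
        = 1/2 * Real.exp (-(n * D) - c * (n * ε)) := by ring
      _ ≤ Q * Real.exp (-(n * D) - c * (n * ε)) :=
          mul_le_mul_of_nonneg_right hQhalf (Real.exp_nonneg _)
      _ = ∑ x ∈ S, strProb ρ x * Real.exp (-(n * D) - c * (n * ε)) := by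
          rw [hQdef, Finset.sum_mul]
      _ ≤ ∑ x ∈ S, strProb θ x := Finset.sum_le_sum fun x hx => (hsandwich x hx).1
      _ = setProb θ S := hPdef.symm
  have hPpos : 0 < setProb θ S := lt_of_lt_of_le (by positivity) hPlb
  have hlogub : Real.log (setProb θ S) ≤ -(n * D) + c * (n * ε) := by
    calc Real.log (setProb θ S) ≤ Real.log (Real.exp (-(n * D) + c * (n * ε))) :=
        Real.log_le_log hPpos hPub
      _ = _ := Real.log_exp _
  have hloglb : -(n * D) - c * (n * ε) - Real.log 2 ≤ Real.log (setProb θ S) := by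
    have h := Real.log_le_log (by positivity) hPlb
    rw [Real.log_div (ne_of_gt (Real.exp_pos _)) (by norm_num), Real.log_exp] at h
    linarith
  have hlog2n : Real.log 2 / n < δ / 2 := by
    have h1 : (2 * Real.log 2 / δ : ℝ) < n := by
      calc (2 * Real.log 2 / δ : ℝ) ≤ ⌈2 * Real.log 2 / δ⌉₊ := Nat.le_ceil _
        _ < n := by exact_mod_cast lt_of_lt_of_le (Nat.lt_succ_self _) hn2
    have h2 : 2 * Real.log 2 < (n:ℝ) * δ := by
      rw [div_lt_iff₀ hδ] at h1
      linarith
    rw [div_lt_iff₀ hnR]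
    linarith
  have hub2 : -(1/(n:ℝ)) * Real.log (setProb θ S) ≤ D + c * ε + Real.log 2 / (n:ℝ) := by
    have e : -(1/(n:ℝ)) * Real.log (setProb θ S) = (- Real.log (setProb θ S)) / n := by
      ring
    rw [e, div_le_iff₀ hnR]
    have e2 : (D + c * ε + Real.log 2 / (n:ℝ)) * n = n * D + c * (n * ε) + Real.log 2 := by
      field_simp
    rw [e2]
    linarith
  have hlb2 : D - c * ε ≤ -(1/(n:ℝ)) * Real.log (setProb θ S) := by
    have e : -(1/(n:ℝ)) * Real.log (setProb θ S) = (- Real.log (setProb θ S)) / n := by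
      ring
    rw [e, le_div_iff₀ hnR]
    have e2 : (D - c * ε) * n = n * D - c * (n * ε) := by ring
    rw [e2]
    linarith
  rw [abs_lt]
  constructor
  · have h0 : 0 ≤ c * ε := mul_nonneg hc0 (le_of_lt hε)
    linarith
  · linarith
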